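/- Every connected graph G has a connecting transition set of size τ(G), where τ(G) is the sum, over all co-connected components C of G with |C| ≥ 2, of (|C| − 2) if the subgraph of G induced by C is connected, and of (|C| − 1) otherwise. -/

import Mathlib

variable {V : Type*}

/-- The transition consisting of the edges `ab` and `bc`, written `abc`. -/
def transitionOf (a b c : V) : Sym2 (Sym2 V) := s(s(a, b), s(b, c))

/-- `t` is a transition of `G`: an unordered pair of two distinct adjacent edges. -/
def SimpleGraph.IsTransition (G : SimpleGraph V) (t : Sym2 (Sym2 V)) : Prop :=
  ∃ a b c, G.Adj a b ∧ G.Adj b c ∧ a ≠ c ∧ t = transitionOf a b c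

/-- A list of vertices (the support of a walk) is `T`-compatible: every pair of
consecutive edges is either a transition of `T` or a backtrack. -/
def TCompatible (T : Set (Sym2 (Sym2 V))) (l : List V) : Prop :=
  ∀ (i : ℕ) (h : i + 2 < l.length),
    l[i]'(by omega) = l[i + 2]'h ∨
    transitionOf (l[i]'(by omega)) (l[i + 1]'(by omega)) (l[i + 2]'h) ∈ T

/-- `G` is `T`-connected: every two vertices are joined by a `T`-compatible walk. -/
def SimpleGraph.TConnected (G : SimpleGraph V) (T : Set (Sym2 (Sym2 V))) : Prop :=
  ∀ u v : V, ∃ p : G.Walk u v, TCompatible T p.support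

/-- `T` is a connecting transition set of `G`. -/
def SimpleGraph.ConnectingTransitionSet (G : SimpleGraph V)
    (T : Finset (Sym2 (Sym2 V))) : Prop :=
  (∀ t ∈ T, G.IsTransition t) ∧ G.TConnected ↑T

/-- `H` is a connecting hypergraph of `G`: every hyperedge has at least two vertices and
induces a connected subgraph, and every pair of distinct non-adjacent vertices is
contained in a common hyperedge. -/
def SimpleGraph.ConnectingHypergraph (G : SimpleGraph V) (H : Finset (Finset V)) : Prop :=
  (∀ E ∈ H, 2 ≤ E.card ∧ (G.induce (E : Set V)).Connected) ∧
  ∀ u v : V, u ≠ v → ¬G.Adj u v → ∃ E ∈ H, u ∈ E ∧ v ∈ E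

/-- The cost of a hypergraph: the sum over hyperedges of (size − 2). -/
def hcost (H : Finset (Finset V)) : ℕ := ∑ E ∈ H, (E.card - 2)

/-- The quantity τ(G): the sum over co-connected components `C` of `G` with `|C| ≥ 2`
of `|C| − 2` if `G[C]` is connected and `|C| − 1` otherwise. -/
noncomputable def tau {V : Type*} [Fintype V] (G : SimpleGraph V) : ℕ := by
  classical
  haveI : Fintype Gᶜ.ConnectedComponent := Fintype.ofFinite _
  exact ∑ C : Gᶜ.ConnectedComponent,
    if 2 ≤ C.supp.ncard then
      (if (G.induce C.supp).Connected then C.supp.ncard - 2 else C.supp.ncard - 1)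
    else 0


section helpers
variable {V : Type*}

lemma transitionOf_symm (a b c : V) : transitionOf c b a = transitionOf a b c := by
  simp only [transitionOf]
  rw [show s(c,b) = s(b,c) from Sym2.eq_swap, show s(b,a) = s(a,b) from Sym2.eq_swap,
    Sym2.eq_swap]

lemma transitionOf_map {W : Type*} (f : V → W) (a b c : V) :
    Sym2.map (Sym2.map f) (transitionOf a b c) = transitionOf (f a) (f b) (f c) := by
  simp [transitionOf, Sym2.map_pair_eq]

/-- Recursive version of `TCompatible`. -/
def TCp (T : Set (Sym2 (Sym2 V))) : List V → Prop
  | a :: b :: c :: l => (a = c ∨ transitionOf a b c ∈ T) ∧ TCp T (b :: c :: l)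
  | _ => True

lemma TCp_nil {T : Set (Sym2 (Sym2 V))} : TCp T [] := by simp [TCp]
lemma TCp_single {T : Set (Sym2 (Sym2 V))} (a : V) : TCp T [a] := by simp [TCp]
lemma TCp_pair {T : Set (Sym2 (Sym2 V))} (a b : V) : TCp T [a, b] := by simp [TCp]

lemma TCompatible_cons3 {T : Set (Sym2 (Sym2 V))} (a b c : V) (l : List V) :
    TCompatible T (a :: b :: c :: l) ↔
      ((a = c ∨ transitionOf a b c ∈ T) ∧ TCompatible T (b :: c :: l)) := by
  constructor
  · intro h
    refine ⟨by simpa using h 0 (by simp only [List.length_cons]; omega), fun i hi => ?_⟩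
    have := h (i+1) (by simp only [List.length_cons] at hi ⊢; omega)
    simpa using this
  · rintro ⟨h0, h⟩ i hi
    match i with
    | 0 => simpa using h0
    | (j+1) =>
      have := h j (by simp only [List.length_cons] at hi ⊢; omega)
      simpa using this

lemma TCompatible_short {T : Set (Sym2 (Sym2 V))} (l : List V) (h : l.length ≤ 2) :
    TCompatible T l := by
  intro i hi; omega

lemma TCp_iff {T : Set (Sym2 (Sym2 V))} : ∀ (l : List V), TCp T l ↔ TCompatible T l
  | [] => by simpa [TCp] using TCompatible_short _ (by simp)
  | [a] => by simpa [TCp] using TCompatible_short _ (by simp)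
  | [a, b] => by simpa [TCp] using TCompatible_short _ (by simp)
  | a :: b :: c :: l => by
      rw [TCompatible_cons3, TCp]
      exact and_congr Iff.rfl (TCp_iff _)

lemma TCp_mono {T T' : Set (Sym2 (Sym2 V))} (hT : T ⊆ T') :
    ∀ {l : List V}, TCp T l → TCp T' l
  | [] , h => h
  | [a], h => h
  | [a, b], h => h
  | a :: b :: c :: l, h => ⟨h.1.imp id (fun ht => hT ht), TCp_mono hT h.2⟩

lemma TCp_tail {T : Set (Sym2 (Sym2 V))} : ∀ {a : V} {l : List V}, TCp T (a :: l) → TCp T l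
  | _, [], _ => TCp_nil
  | _, [a], _ => TCp_single a
  | _, _ :: _ :: _, h => h.2

lemma TCp_map {W : Type*} (f : V → W) {T : Set (Sym2 (Sym2 V))} :
    ∀ {l : List V}, TCp T l → TCp (Sym2.map (Sym2.map f) '' T) (l.map f)
  | [] , h => TCp_nil
  | [a], h => TCp_single _
  | [a, b], h => TCp_pair _ _
  | a :: b :: c :: l, h => by
      refine ⟨h.1.imp (fun e => by rw [e]) (fun ht => ?_), TCp_map f h.2⟩
      rw [← transitionOf_map]
      exact Set.mem_image_of_mem _ ht

lemma TCp_glue {T : Set (Sym2 (Sym2 V))} (a b : V) (Q : List V)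
    (h2 : TCp T (a :: b :: Q)) :
    ∀ (A : List V), TCp T (A ++ [a, b]) → TCp T (A ++ a :: b :: Q)
  | [], _ => h2
  | [c], h1 => ⟨h1.1, h2⟩
  | c :: d :: A', h1 => by
      match A' with
      | [] => exact ⟨h1.1, TCp_glue a b Q h2 [d] h1.2⟩
      | e :: A'' => exact ⟨h1.1, TCp_glue a b Q h2 (d :: e :: A'') h1.2⟩

lemma TCp_reverse {T : Set (Sym2 (Sym2 V))} {l : List V} (h : TCp T l) :
    TCp T l.reverse := by
  rw [TCp_iff] at h ⊢
  intro i hi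
  rw [List.length_reverse] at hi
  have h3 : l.reverse[i] = l[l.length - 1 - i]'(by omega) := by
    rw [List.getElem_reverse]
  have h4 : l.reverse[i+1]'(by rw [List.length_reverse]; omega)
      = l[l.length - 2 - i]'(by omega) := by
    rw [List.getElem_reverse]; congr 1; omega
  have h5 : l.reverse[i+2]'(by rw [List.length_reverse]; omega)
      = l[l.length - 3 - i]'(by omega) := by
    rw [List.getElem_reverse]; congr 1; omega
  have hgc : ∀ (x y : ℕ) (hx : x < l.length) (hy : y < l.length), x = y →
      l[x]'hx = l[y]'hy := by intro x y hx hy hxy; subst hxy; rfl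
  have := h (l.length - 3 - i) (by omega)
  rw [h3, h4, h5,
    hgc (l.length - 1 - i) (l.length - 3 - i + 2) (by omega) (by omega) (by omega),
    hgc (l.length - 2 - i) (l.length - 3 - i + 1) (by omega) (by omega) (by omega)]
  rcases this with h' | h'
  · exact Or.inl h'.symm
  · right; rwa [transitionOf_symm] at h'

open SimpleGraph

/-- Push a walk into an induced subgraph when its support lies in the set. -/
def walkInduce {G : SimpleGraph V} {s : Set V} :
    ∀ {u v : V} (p : G.Walk u v) (hp : ∀ w ∈ p.support, w ∈ s),
      (G.induce s).Walk ⟨u, hp u p.start_mem_support⟩ ⟨v, hp v p.end_mem_support⟩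
  | _, _, SimpleGraph.Walk.nil, hp => SimpleGraph.Walk.nil
  | u, v, SimpleGraph.Walk.cons h p, hp =>
      SimpleGraph.Walk.cons (by simpa using h)
        (walkInduce p (fun w hw => hp w (by simp [hw])))

/-- A connected graph on at least two vertices has a non-cut vertex. -/
lemma exists_noncut [Fintype V] (G : SimpleGraph V) (hc : G.Connected)
    (h2 : 2 ≤ Fintype.card V) :
    ∃ v0 : V, (G.induce ({v0}ᶜ : Set V)).Connected := by
  classical
  obtain ⟨r0⟩ := hc.nonempty
  obtain ⟨v0, -, hv0⟩ := Finset.exists_max_image Finset.univ (fun v => G.dist r0 v)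
    ⟨r0, Finset.mem_univ r0⟩
  refine ⟨v0, ?_⟩
  have hv0r : v0 ≠ r0 := by
    rintro rfl
    have : ∀ v : V, v = v0 := by
      intro v
      have := hv0 v (Finset.mem_univ v)
      simp only [SimpleGraph.dist_self] at this
      have := Nat.le_zero.mp this
      exact ((hc.dist_eq_zero_iff).mp this).symm
    have : Fintype.card V ≤ 1 := Fintype.card_le_one_iff.mpr (fun a b => (this a).trans (this b).symm)
    omega
  -- every vertex other than v0 reaches r0 avoiding v0
  have key : ∀ w : V, w ≠ v0 → ∃ p : G.Walk w r0, ∀ x ∈ p.support, x ≠ v0 := by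
    intro w hw
    obtain ⟨p, hp⟩ := (hc.preconnected r0 w).exists_walk_length_eq_dist
    by_cases hv : v0 ∈ p.support
    · exfalso
      have h1 : G.dist r0 v0 ≤ (p.takeUntil v0 hv).length := SimpleGraph.dist_le _
      have h2 : G.dist v0 w ≤ (p.dropUntil v0 hv).length := SimpleGraph.dist_le _
      have h3 : (p.takeUntil v0 hv).length + (p.dropUntil v0 hv).length = p.length := by
        rw [← SimpleGraph.Walk.length_append, SimpleGraph.Walk.take_spec]
      have h4 : 0 < G.dist v0 w := hc.pos_dist_of_ne (Ne.symm hw)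
      have h5 : G.dist r0 w ≤ G.dist r0 v0 := hv0 w (Finset.mem_univ w)
      omega
    · refine ⟨p.reverse, fun x hx => ?_⟩
      rw [SimpleGraph.Walk.support_reverse, List.mem_reverse] at hx
      exact fun hxx => hv (hxx ▸ hx)
  rw [SimpleGraph.connected_iff]
  refine ⟨?_, ⟨⟨r0, by simpa using hv0r.symm⟩⟩⟩
  · intro a b
    obtain ⟨pa, hpa⟩ := key a.1 (Set.mem_compl_singleton_iff.mp a.2)
    obtain ⟨pb, hpb⟩ := key b.1 (Set.mem_compl_singleton_iff.mp b.2)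
    have ra : (G.induce ({v0}ᶜ : Set V)).Reachable a ⟨r0, by simpa using hv0r.symm⟩ := by
      refine ⟨(walkInduce pa (fun w hw => by simpa using hpa w hw)).copy ?_ rfl⟩
      simp
    have rb : (G.induce ({v0}ᶜ : Set V)).Reachable b ⟨r0, by simpa using hv0r.symm⟩ := by
      refine ⟨(walkInduce pb (fun w hw => by simpa using hpb w hw)).copy ?_ rfl⟩
      simp
    exact ra.trans rb.symm

universe w

lemma core (n : ℕ) : ∀ {W : Type w} [Fintype W] (G : SimpleGraph W),
    G.Connected → Fintype.card W = n → 2 ≤ n →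
    ∃ (x r : W) (T : Finset (Sym2 (Sym2 W))),
      (∀ t ∈ T, G.IsTransition t) ∧ T.card = n - 2 ∧
      ∀ v : W, ∃ p : G.Walk v r, TCp ↑T p.support ∧ ∃ q, p.support = q ++ [x, r] := by
  induction n with
  | zero => intro W _ G hc hcard h2; omega
  | succ n ih =>
    intro W _ G hc hcard h2
    classical
    by_cases hbase : n + 1 = 2
    · -- base case : two vertices
      obtain ⟨x, r, hxr, huniv⟩ := (Nat.card_eq_two_iff (α := W)).mp
        (by rw [Nat.card_eq_fintype_card]; omega)
      have hmem : ∀ v : W, v = x ∨ v = r := by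
        intro v
        have : v ∈ ({x, r} : Set W) := by rw [huniv]; trivial
        simpa using this
      have hadj : G.Adj x r := by
        obtain ⟨p⟩ := hc.preconnected x r
        cases p with
        | nil => exact absurd rfl hxr
        | @cons _ y _ h q =>
          rcases hmem y with he | he
          · rw [he] at h; exact absurd rfl h.ne
          · rw [he] at h; exact h
      refine ⟨x, r, ∅, by simp, by simp; omega, fun v => ?_⟩
      rcases hmem v with rfl | rfl
      · exact ⟨SimpleGraph.Walk.cons hadj SimpleGraph.Walk.nil, by simpa using TCp_pair _ _,
          [], by simp⟩
      · refine ⟨SimpleGraph.Walk.cons hadj.symm (SimpleGraph.Walk.cons hadj SimpleGraph.Walk.nil),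
          ?_, [v], by simp⟩
        have : (SimpleGraph.Walk.cons hadj.symm
            (SimpleGraph.Walk.cons hadj SimpleGraph.Walk.nil)).support = [v, x, v] := by simp
        rw [this]
        exact ⟨Or.inl rfl, TCp_pair _ _⟩
    · -- inductive step
      have h3 : 3 ≤ n + 1 := by omega
      obtain ⟨v0, hconn'⟩ := exists_noncut G hc (by omega)
      set s : Set W := {v0}ᶜ with hs
      haveI : Fintype ↥s := Fintype.ofFinite _
      have hcard' : Fintype.card ↥s = n := by
        have h1 := Fintype.card_compl_set ({v0} : Set W)
        have h2 : Fintype.card ↥({v0} : Set W) = 1 := by simp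
        rw [h2, hcard] at h1
        have h3 : Fintype.card ↥s = n + 1 - 1 := h1
        omega
      obtain ⟨x', r', T', hvalid', hcard'', hwalks'⟩ :=
        ih (G.induce s) hconn' hcard' (by omega)
      -- a neighbour of v0
      have hexu : ∃ u, G.Adj v0 u := by
        obtain ⟨z, hz⟩ := Fintype.exists_ne_of_one_lt_card (by omega) v0
        obtain ⟨p⟩ := hc.preconnected v0 z
        cases p with
        | nil => exact absurd rfl hz
        | cons h _ => exact ⟨_, h⟩
      obtain ⟨u, hu⟩ := hexu
      have hune : u ∈ s := Set.mem_compl_singleton_iff.mpr hu.ne'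
      obtain ⟨p_u, hTCu, q_u, hsupp_u⟩ := hwalks' ⟨u, hune⟩
      -- the second vertex of p_u
      obtain ⟨y', hadj_uy, L, hsupp_u2⟩ :
          ∃ (y' : ↥s), (G.induce s).Adj ⟨u, hune⟩ y' ∧ ∃ L,
            p_u.support = ⟨u, hune⟩ :: y' :: L := by
        cases p_u with
        | nil =>
          exfalso
          have hlen := congrArg List.length hsupp_u
          simp only [SimpleGraph.Walk.support_nil, List.length_append, List.length_cons,
            List.length_singleton, List.length_nil] at hlen
          omega
        | cons h p =>
          exact ⟨_, h, p.support.tail, by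
            rw [SimpleGraph.Walk.support_cons, ← SimpleGraph.Walk.support_eq_cons p]⟩
      set F : Sym2 (Sym2 ↥s) → Sym2 (Sym2 W) :=
        Sym2.map (Sym2.map (Subtype.val)) with hF
      set t : Sym2 (Sym2 W) := transitionOf v0 u ↑y' with ht
      set T : Finset (Sym2 (Sym2 W)) := insert t (T'.image F) with hT
      -- elements of image avoid v0
      have himage_avoid : ∀ t'' ∈ T'.image F, ∀ e ∈ t'', ∀ z ∈ e, z ≠ v0 := by
        intro t'' ht'' e he z hz
        obtain ⟨t₀, ht₀, rfl⟩ := Finset.mem_image.mp ht''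
        rw [hF] at he
        obtain ⟨e₀, he₀, rfl⟩ := Sym2.mem_map.mp he
        obtain ⟨z₀, hz₀, rfl⟩ := Sym2.mem_map.mp hz
        exact Set.mem_compl_singleton_iff.mp z₀.2
      have htnotin : t ∉ T'.image F := by
        intro hmem
        exact himage_avoid t hmem s(v0, u) (by rw [ht, transitionOf]; exact Sym2.mem_mk_left _ _)
          v0 (Sym2.mem_mk_left _ _) rfl
      have hinj : Function.Injective F := Sym2.map.injective (Sym2.map.injective Subtype.val_injective)
      have hTcard : T.card = (n + 1) - 2 := by
        rw [hT, Finset.card_insert_of_notMem htnotin, Finset.card_image_of_injective _ hinj,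
          hcard'']
        omega
      -- the embedding
      have hFvalid : ∀ t'' ∈ T, G.IsTransition t'' := by
        intro t'' ht''
        rw [hT, Finset.mem_insert] at ht''
        rcases ht'' with rfl | ht''
        · exact ⟨v0, u, ↑y', hu, by simpa using hadj_uy, fun hvy =>
            Set.mem_compl_singleton_iff.mp y'.2 hvy.symm, rfl⟩
        · obtain ⟨t₀, ht₀, rfl⟩ := Finset.mem_image.mp ht''
          obtain ⟨a, b, c, hab, hbc, hac, rfl⟩ := hvalid' t₀ ht₀
          exact ⟨↑a, ↑b, ↑c, by simpa using hab, by simpa using hbc,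
            fun hh => hac (Subtype.val_injective hh), (transitionOf_map _ _ _ _).symm⟩
      -- mapped walks
      have hmap : ∀ (a b : ↥s) (p : (G.induce s).Walk a b), TCp (↑T' : Set _) p.support →
          ∃ P : G.Walk ↑a ↑b, P.support = p.support.map Subtype.val ∧ TCp (↑T : Set _) P.support := by
        intro a b p hp
        refine ⟨p.map (SimpleGraph.Embedding.induce s).toHom, by exact SimpleGraph.Walk.support_map _ _, ?_⟩
        have h1 : (p.map (SimpleGraph.Embedding.induce s).toHom).support
            = p.support.map Subtype.val := by exact SimpleGraph.Walk.support_map _ _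
        refine (congrArg (TCp (↑T : Set (Sym2 (Sym2 W)))) h1).mpr ?_
        refine TCp_mono ?_ (TCp_map Subtype.val hp)
        intro z hz
        rw [← Finset.coe_image] at hz
        rw [hT]
        simp only [Finset.coe_insert, Set.mem_insert_iff]
        exact Or.inr hz
      have hwalkv0 : ∃ p : G.Walk v0 ↑r', TCp (↑T : Set (Sym2 (Sym2 W))) p.support ∧
          ∃ q, p.support = q ++ [(↑x' : W), ↑r'] := by
        obtain ⟨P_u, hPsupp, hPTC⟩ := hmap _ _ p_u hTCu
        refine ⟨SimpleGraph.Walk.cons hu P_u, ?_, ?_⟩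
        · have hsup : (SimpleGraph.Walk.cons hu P_u).support
              = v0 :: u :: ↑y' :: (L.map Subtype.val) := by
            simp only [SimpleGraph.Walk.support_cons, hPsupp, hsupp_u2, List.map_cons]
          rw [hsup]
          refine ⟨Or.inr ?_, ?_⟩
          · rw [hT]; simp [ht]
          · have : P_u.support = u :: ↑y' :: (L.map Subtype.val) := by
              rw [hPsupp, hsupp_u2]; simp
            rw [← this]; exact hPTC
        · refine ⟨v0 :: (q_u.map Subtype.val), ?_⟩
          simp only [SimpleGraph.Walk.support_cons, hPsupp, hsupp_u, List.map_append]
          simp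
      refine ⟨↑x', ↑r', T, hFvalid, hTcard, fun v => ?_⟩
      by_cases hv : v = v0
      · rw [hv]; exact hwalkv0
      · obtain ⟨p_v, hTCv, q_v, hsupp_v⟩ := hwalks' ⟨v, Set.mem_compl_singleton_iff.mpr hv⟩
        obtain ⟨P_v, hPsupp, hPTC⟩ := hmap _ _ p_v hTCv
        refine ⟨P_v, hPTC, q_v.map Subtype.val, ?_⟩
        rw [hPsupp, hsupp_v]
        simp

/-- Concatenate two funnel walks (both ending with the edge `x r`). -/
lemma funnel_concat {G : SimpleGraph V} {T : Set (Sym2 (Sym2 V))} {x r u v : V}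
    (p₁ : G.Walk u r) (p₂ : G.Walk v r)
    (h₁ : TCp T p₁.support) (h₂ : TCp T p₂.support)
    (q₁ q₂ : List V) (e₁ : p₁.support = q₁ ++ [x, r]) (e₂ : p₂.support = q₂ ++ [x, r]) :
    ∃ p : G.Walk u v, TCp T p.support := by
  refine ⟨p₁.append p₂.reverse, ?_⟩
  have hsup : (p₁.append p₂.reverse).support = p₁.support ++ p₂.reverse.support.tail := by
    rw [SimpleGraph.Walk.support_append]
  have hrev : p₂.reverse.support = r :: x :: q₂.reverse := by
    rw [SimpleGraph.Walk.support_reverse, e₂]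
    simp
  have htail : p₂.reverse.support.tail = x :: q₂.reverse := by rw [hrev]; rfl
  rw [hsup, htail, e₁]
  have hglue := TCp_glue (T := T) x r (x :: q₂.reverse) ?_ q₁ (e₁ ▸ h₁)
  · have : q₁ ++ [x, r] ++ x :: q₂.reverse = q₁ ++ x :: r :: x :: q₂.reverse := by simp
    rw [this]
    exact hglue
  · -- TCp T (x :: r :: x :: q₂.reverse)
    show TCp T (x :: r :: x :: q₂.reverse)
    refine ⟨Or.inl rfl, ?_⟩
    have : (r :: x :: q₂.reverse) = p₂.support.reverse := by
      rw [e₂]; simp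
    rw [show (r :: x :: q₂.reverse : List V) = p₂.support.reverse from this]
    exact TCp_reverse h₂

/-- The hub-chain construction: `w` adjacent to everything in `l`. -/
lemma hub_chain {G : SimpleGraph V} {w : V} :
    ∀ (l : List V), (∀ x ∈ l, G.Adj x w) → l.Nodup → l ≠ [] →
    ∃ (xl : V) (T : Finset (Sym2 (Sym2 V))),
      T.card = l.length - 1 ∧
      (∀ t ∈ T, ∃ a b, a ∈ l ∧ b ∈ l ∧ a ≠ b ∧ t = transitionOf a w b) ∧
      ∀ v ∈ l, ∃ p : G.Walk v w, TCp ↑T p.support ∧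
        (∃ q, p.support = v :: w :: q) ∧ (∃ q', p.support = q' ++ [xl, w])
  | [], _, _, hne => absurd rfl hne
  | [x], hadj, _, _ => by
      classical
      refine ⟨x, ∅, by simp, by simp, fun v hv => ?_⟩
      have hv' : v = x := by simpa using hv
      subst hv'
      refine ⟨SimpleGraph.Walk.cons (hadj v (by simp)) SimpleGraph.Walk.nil, ?_, ?_, ?_⟩
      · simpa using TCp_pair v w
      · exact ⟨[], by simp⟩
      · exact ⟨[], by simp⟩
  | x :: y :: rest, hadj, hnd, _ => by
      classical
      obtain ⟨xl, T', hcard', hform', hwalks'⟩ :=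
        hub_chain (y :: rest) (fun z hz => hadj z (by simp [hz]))
          (List.nodup_cons.mp hnd).2 (by simp)
      have hxw : G.Adj x w := hadj x (by simp)
      have hyw : G.Adj y w := hadj y (by simp)
      have hwx : w ≠ x := hxw.ne'
      have hxy : x ≠ y := by
        intro h
        exact (List.nodup_cons.mp hnd).1 (by rw [h]; exact List.mem_cons_self)
      set t : Sym2 (Sym2 V) := transitionOf x w y with ht
      have htnot : t ∉ T' := by
        intro hmem
        obtain ⟨a, b, ha, hb, hab, heq⟩ := hform' t hmem
        have hx_notmem : x ∉ y :: rest := (List.nodup_cons.mp hnd).1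
        have haw : a ≠ w := (hadj a (by simp [ha])).ne
        have hbw : b ≠ w := (hadj b (by simp [hb])).ne
        rw [ht, transitionOf, transitionOf, Sym2.eq_iff] at heq
        rcases heq with ⟨h1, -⟩ | ⟨h1, -⟩
        · rw [Sym2.eq_iff] at h1
          rcases h1 with ⟨rfl, -⟩ | ⟨h1a, -⟩
          · exact hx_notmem ha
          · exact hwx h1a.symm
        · rw [Sym2.eq_iff] at h1
          rcases h1 with ⟨h1a, -⟩ | ⟨rfl, -⟩
          · exact hwx h1a.symm
          · exact hx_notmem hb
      refine ⟨xl, insert t T', ?_, ?_, ?_⟩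
      · rw [Finset.card_insert_of_notMem htnot, hcard']
        simp
      · intro t'' ht''
        rcases Finset.mem_insert.mp ht'' with rfl | ht''
        · exact ⟨x, y, by simp, by simp, hxy, rfl⟩
        · obtain ⟨a, b, ha, hb, hab, heq⟩ := hform' t'' ht''
          exact ⟨a, b, by simp [ha], by simp [hb], hab, heq⟩
      · intro v hv
        have hsub : (↑T' : Set (Sym2 (Sym2 V))) ⊆ ↑(insert t T') := by
          intro z hz; simp only [Finset.coe_insert, Set.mem_insert_iff]; right; exact hz
        rcases List.mem_cons.mp hv with rfl | hv'
        · -- v = x : walk x, w, y, (y's walk minus head)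
          obtain ⟨p_y, hTCy, ⟨qy, hsy⟩, ⟨qy', hsy'⟩⟩ := hwalks' y (by simp)
          refine ⟨SimpleGraph.Walk.cons hxw (SimpleGraph.Walk.cons hyw.symm p_y), ?_, ?_, ?_⟩
          · have hsup : (SimpleGraph.Walk.cons hxw (SimpleGraph.Walk.cons hyw.symm p_y)).support
                = v :: w :: p_y.support := by simp
            rw [hsup, hsy]
            refine ⟨Or.inr (by simp [ht]), Or.inl rfl, ?_⟩
            rw [← hsy]
            exact TCp_mono hsub hTCy
          · exact ⟨p_y.support, by simp⟩
          · refine ⟨v :: w :: qy', by simp [hsy']⟩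
        · obtain ⟨p_v, hTCv, hq, hq'⟩ := hwalks' v hv'
          refine ⟨p_v, TCp_mono hsub hTCv, hq, hq'⟩

end helpers

set_option maxHeartbeats 1000000 in
/-- Every connected graph has a connecting transition set of size τ(G). -/
theorem stmt4 {V : Type*} [Fintype V] [DecidableEq V] (G : SimpleGraph V)
    (hc : G.Connected) :
    ∃ T : Finset (Sym2 (Sym2 V)), G.ConnectingTransitionSet T ∧ T.card = tau G := by
  classical
  letI inst2 : Fintype Gᶜ.ConnectedComponent := Fintype.ofFinite _
  obtain ⟨v_any⟩ := hc.nonempty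
  have hsuppd : ∀ (C D : Gᶜ.ConnectedComponent) (z : V), z ∈ C.supp → z ∈ D.supp → C = D := by
    intro C D z hzC hzD
    rw [SimpleGraph.ConnectedComponent.mem_supp_iff] at hzC hzD
    rw [← hzC, ← hzD]
  have hadj_out : ∀ (C : Gᶜ.ConnectedComponent) (z w : V), z ∈ C.supp → w ∉ C.supp →
      G.Adj z w := by
    intro C z w hz hw
    have hzw : z ≠ w := fun h => hw (h ▸ hz)
    by_contra hadj
    have hcadj : Gᶜ.Adj z w := by rw [SimpleGraph.compl_adj]; exact ⟨hzw, hadj⟩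
    have hmkeq : Gᶜ.connectedComponentMk z = Gᶜ.connectedComponentMk w :=
      SimpleGraph.ConnectedComponent.sound hcadj.reachable
    rw [SimpleGraph.ConnectedComponent.mem_supp_iff] at hz
    exact hw (by rw [SimpleGraph.ConnectedComponent.mem_supp_iff, ← hmkeq, hz])
  have hcomp : ∀ C : Gᶜ.ConnectedComponent,
      ∃ (Tc : Finset (Sym2 (Sym2 V))) (x r : V),
        Tc.card = (if 2 ≤ C.supp.ncard then
          (if (G.induce C.supp).Connected then C.supp.ncard - 2 else C.supp.ncard - 1)
          else 0) ∧
        (∀ t ∈ Tc, G.IsTransition t) ∧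
        (2 ≤ C.supp.ncard → ∀ v ∈ C.supp, ∃ p : G.Walk v r, TCp ↑Tc p.support ∧
          ∃ q, p.support = q ++ [x, r]) ∧
        ((∀ t ∈ Tc, ∀ e ∈ t, ∀ z ∈ e, z ∈ C.supp) ∨
         (∃ w, w ∉ C.supp ∧ ∀ t ∈ Tc, ∃ a b, a ∈ C.supp ∧ b ∈ C.supp ∧ a ≠ b ∧
            t = transitionOf a w b)) := by
    intro C
    by_cases h2 : 2 ≤ C.supp.ncard
    · by_cases hCc : (G.induce C.supp).Connected
      · -- connected component : core lemma on the subtype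
        letI : Fintype ↥C.supp := Fintype.ofFinite _
        have hcard : Fintype.card ↥C.supp = C.supp.ncard := by
          rw [← Nat.card_coe_set_eq, Nat.card_eq_fintype_card]
        obtain ⟨x', r', T', hvalid', hcard', hwalks'⟩ :=
          core (C.supp.ncard) (G.induce C.supp) hCc hcard h2
        set F : Sym2 (Sym2 ↥C.supp) → Sym2 (Sym2 V) :=
          Sym2.map (Sym2.map (Subtype.val)) with hF
        have hinj : Function.Injective F :=
          Sym2.map.injective (Sym2.map.injective Subtype.val_injective)
        refine ⟨T'.image F, ↑x', ↑r', ?_, ?_, ?_, Or.inl ?_⟩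
        · rw [Finset.card_image_of_injective _ hinj, hcard', if_pos h2, if_pos hCc]
        · intro t'' ht''
          obtain ⟨t₀, ht₀, rfl⟩ := Finset.mem_image.mp ht''
          obtain ⟨a, b, c, hab, hbc, hac, rfl⟩ := hvalid' t₀ ht₀
          exact ⟨↑a, ↑b, ↑c, by simpa using hab, by simpa using hbc,
            fun hh => hac (Subtype.val_injective hh), (transitionOf_map _ _ _ _).symm⟩
        · intro _ v hv
          obtain ⟨p_v, hTCv, q_v, hsupp_v⟩ := hwalks' ⟨v, hv⟩
          refine ⟨p_v.map (SimpleGraph.Embedding.induce C.supp).toHom, ?_, q_v.map Subtype.val, ?_⟩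
          · have h1 : (p_v.map (SimpleGraph.Embedding.induce C.supp).toHom).support
                = p_v.support.map Subtype.val := by exact SimpleGraph.Walk.support_map _ _
            refine (congrArg (TCp (↑(T'.image F) : Set (Sym2 (Sym2 V)))) h1).mpr ?_
            refine TCp_mono ?_ (TCp_map Subtype.val hTCv)
            rw [← Finset.coe_image]
          · have h1 : (p_v.map (SimpleGraph.Embedding.induce C.supp).toHom).support
                = p_v.support.map Subtype.val := by exact SimpleGraph.Walk.support_map _ _
            refine h1.trans ?_
            rw [hsupp_v]
            simp
        · intro t ht e he z hz
          obtain ⟨t₀, ht₀, rfl⟩ := Finset.mem_image.mp ht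
          rw [hF] at he
          obtain ⟨e₀, he₀, rfl⟩ := Sym2.mem_map.mp he
          obtain ⟨z₀, hz₀, rfl⟩ := Sym2.mem_map.mp hz
          exact z₀.2
      · -- disconnected component : hub chain
        have hexw : ∃ w, w ∉ C.supp := by
          by_contra hall
          push_neg at hall
          have huniv : C.supp = Set.univ := Set.eq_univ_of_forall hall
          exact hCc (by rw [huniv]; exact (G.induceUnivIso).connected_iff.mpr hc)
        obtain ⟨w, hw⟩ := hexw
        have hmeml : ∀ z, z ∈ C.supp.toFinset.toList ↔ z ∈ C.supp := by
          intro z; rw [Finset.mem_toList, Set.mem_toFinset]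
        have hlen : C.supp.toFinset.toList.length = C.supp.ncard := by
          rw [Finset.length_toList, ← Set.ncard_eq_toFinset_card']
        have hne : C.supp.toFinset.toList ≠ [] := by
          intro h
          rw [h] at hlen
          simp at hlen
          omega
        obtain ⟨xl, Tc, hcard, hform, hwalks⟩ := hub_chain (G := G) (w := w)
          C.supp.toFinset.toList
          (fun z hz => hadj_out C z w ((hmeml z).mp hz) hw) (Finset.nodup_toList _) hne
        refine ⟨Tc, xl, w, ?_, ?_, ?_, Or.inr ⟨w, hw, ?_⟩⟩
        · rw [hcard, hlen, if_pos h2, if_neg hCc]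
        · intro t ht
          obtain ⟨a, b, ha, hb, hab, heq⟩ := hform t ht
          exact ⟨a, w, b, hadj_out C a w ((hmeml a).mp ha) hw,
            (hadj_out C b w ((hmeml b).mp hb) hw).symm, hab, heq⟩
        · intro _ v hv
          obtain ⟨p, hTCp, _, hq'⟩ := hwalks v ((hmeml v).mpr hv)
          exact ⟨p, hTCp, hq'⟩
        · intro t ht
          obtain ⟨a, b, ha, hb, hab, heq⟩ := hform t ht
          exact ⟨a, b, (hmeml a).mp ha, (hmeml b).mp hb, hab, heq⟩
    · exact ⟨∅, v_any, v_any, by rw [if_neg h2]; simp, by simp,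
        fun h => absurd h h2, Or.inl (by simp)⟩
  choose Tf xf rf hTcard hTvalid hTwalk hTinv using hcomp
  have hdisj : ∀ C ∈ (Finset.univ : Finset Gᶜ.ConnectedComponent), ∀ D ∈ Finset.univ,
      C ≠ D → Disjoint (Tf C) (Tf D) := by
    intro C _ D _ hCD
    rw [Finset.disjoint_left]
    intro t htC htD
    have hmix : ∀ z : V, z ∈ C.supp → z ∈ D.supp → False :=
      fun z h1 h2 => hCD (hsuppd C D z h1 h2)
    rcases hTinv C with hC | ⟨w, hwC, hC⟩ <;> rcases hTinv D with hD | ⟨w', hwD, hD⟩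
    · exact hmix t.out.1.out.1
        (hC t htC t.out.1 (Sym2.out_fst_mem t) t.out.1.out.1 (Sym2.out_fst_mem _))
        (hD t htD t.out.1 (Sym2.out_fst_mem t) t.out.1.out.1 (Sym2.out_fst_mem _))
    · obtain ⟨a, b, haD, hbD, hab, heq⟩ := hD t htD
      refine hmix a (hC t htC s(a, w') ?_ a (Sym2.mem_mk_left _ _)) haD
      rw [heq, transitionOf]
      exact Sym2.mem_mk_left _ _
    · obtain ⟨a, b, haC, hbC, hab, heq⟩ := hC t htC
      refine hmix a haC (hD t htD s(a, w) ?_ a (Sym2.mem_mk_left _ _))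
      rw [heq, transitionOf]
      exact Sym2.mem_mk_left _ _
    · obtain ⟨a, b, haC, hbC, hab, heq⟩ := hC t htC
      obtain ⟨a', b', haD, hbD, hab', heq'⟩ := hD t htD
      have key : transitionOf a w b = transitionOf a' w' b' := heq.symm.trans heq'
      rw [transitionOf, transitionOf, Sym2.eq_iff] at key
      rcases key with ⟨h1, h2⟩ | ⟨h1, h2⟩ <;> rw [Sym2.eq_iff] at h1 h2
      · rcases h1 with ⟨h1a, h1b⟩ | ⟨h1a, h1b⟩
        · exact hmix a haC (by rw [h1a]; exact haD)
        · rcases h2 with ⟨h2a, h2b⟩ | ⟨h2a, h2b⟩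
          · exact hmix b hbC (by rw [h2b]; exact hbD)
          · exact hab (h1a.trans h2b.symm)
      · rcases h1 with ⟨h1a, h1b⟩ | ⟨h1a, h1b⟩
        · rcases h2 with ⟨h2a, h2b⟩ | ⟨h2a, h2b⟩
          · exact hab (h1a.trans h2b.symm)
          · exact hmix b hbC (by rw [h2b]; exact haD)
        · exact hmix a haC (by rw [h1a]; exact hbD)
  refine ⟨Finset.univ.biUnion Tf, ⟨?_, ?_⟩, ?_⟩
  · intro t ht
    obtain ⟨C, _, htC⟩ := Finset.mem_biUnion.mp ht
    exact hTvalid C t htC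
  · -- T-connectedness
    intro u v
    by_cases huv : u = v
    · subst huv
      exact ⟨SimpleGraph.Walk.nil, TCompatible_short _ (by simp)⟩
    by_cases hmk : Gᶜ.connectedComponentMk u = Gᶜ.connectedComponentMk v
    · set C := Gᶜ.connectedComponentMk u with hCdef
      have hu : u ∈ C.supp := by rw [SimpleGraph.ConnectedComponent.mem_supp_iff]
      have hv : v ∈ C.supp := by
        rw [SimpleGraph.ConnectedComponent.mem_supp_iff, ← hmk]
      have h2 : 2 ≤ C.supp.ncard := by
        have hsub : ({u, v} : Set V) ⊆ C.supp := by
          intro z hz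
          rcases hz with rfl | hz
          · exact hu
          · rw [Set.mem_singleton_iff] at hz
            subst hz
            exact hv
        calc 2 = ({u, v} : Set V).ncard := (Set.ncard_pair huv).symm
        _ ≤ C.supp.ncard := Set.ncard_le_ncard hsub (Set.toFinite _)
      obtain ⟨p₁, hTC₁, q₁, he₁⟩ := hTwalk C h2 u hu
      obtain ⟨p₂, hTC₂, q₂, he₂⟩ := hTwalk C h2 v hv
      have hsub : (↑(Tf C) : Set (Sym2 (Sym2 V))) ⊆ ↑(Finset.univ.biUnion Tf) := by
        intro z hz
        simp only [Finset.coe_biUnion, Finset.coe_univ, Set.mem_iUnion]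
        exact ⟨C, trivial, hz⟩
      obtain ⟨p, hp⟩ := funnel_concat p₁ p₂ (TCp_mono hsub hTC₁) (TCp_mono hsub hTC₂)
        q₁ q₂ he₁ he₂
      exact ⟨p, (TCp_iff _).mp hp⟩
    · have hadj : G.Adj u v := by
        apply hadj_out (Gᶜ.connectedComponentMk u) u v
        · rw [SimpleGraph.ConnectedComponent.mem_supp_iff]
        · rw [SimpleGraph.ConnectedComponent.mem_supp_iff]
          exact fun h => hmk h.symm
      exact ⟨SimpleGraph.Walk.cons hadj SimpleGraph.Walk.nil,
        TCompatible_short _ (by simp)⟩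
  · rw [Finset.card_biUnion hdisj]
    unfold tau
    rw [Subsingleton.elim (Fintype.ofFinite Gᶜ.ConnectedComponent) inst2]
    apply Finset.sum_congr rfl
    intro C _
    by_cases h2 : 2 ≤ C.supp.ncard <;> by_cases hCc : (G.induce C.supp).Connected <;>
      simp [hTcard C, h2, hCc]
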